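/- Let (A, B, C) be a recollement of abelian categories, and let (T', F') and (T'', F'') be torsion pairs in A and C respectively. Define T = {B ∈ B : i*(B) ∈ T' and j^*(B) ∈ T''} and F = {B ∈ B : i^!(B) ∈ F' and j^*(B) ∈ F''}. Then Hom_B(X, Y) = 0 for all X ∈ T and Y ∈ F. -/

import Mathlib

open CategoryTheory Limits

universe u₁ u₂ u₃ v₁ v₂ v₃

/-- A recollement of abelian categories `(𝒜, ℬ, 𝒞)`. -/
structure Recollement (𝒜 : Type u₁) (ℬ : Type u₂) (𝒞 : Type u₃)
    [Category.{v₁} 𝒜] [Category.{v₂} ℬ] [Category.{v₃} 𝒞]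
    [Abelian 𝒜] [Abelian ℬ] [Abelian 𝒞] where
  /-- `i^* : ℬ → 𝒜` -/
  iStar : ℬ ⥤ 𝒜
  /-- `i_* : 𝒜 → ℬ` -/
  iIns : 𝒜 ⥤ ℬ
  /-- `i^! : ℬ → 𝒜` -/
  iShriek : ℬ ⥤ 𝒜
  /-- `j_! : 𝒞 → ℬ` -/
  jShriek : 𝒞 ⥤ ℬ
  /-- `j^* : ℬ → 𝒞` -/
  jStar : ℬ ⥤ 𝒞
  /-- `j_* : 𝒞 → ℬ` -/
  jIns : 𝒞 ⥤ ℬ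
  iStar_additive : iStar.Additive
  iIns_additive : iIns.Additive
  iShriek_additive : iShriek.Additive
  jShriek_additive : jShriek.Additive
  jStar_additive : jStar.Additive
  jIns_additive : jIns.Additive
  /-- the adjoint pair `(i^*, i_*)` -/
  adj₁ : iStar ⊣ iIns
  /-- the adjoint pair `(i_*, i^!)` -/
  adj₂ : iIns ⊣ iShriek
  /-- the adjoint pair `(j_!, j^*)` -/
  adj₃ : jShriek ⊣ jStar
  /-- the adjoint pair `(j^*, j_*)` -/
  adj₄ : jStar ⊣ jIns
  iIns_full : iIns.Full
  iIns_faithful : iIns.Faithful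
  jShriek_full : jShriek.Full
  jShriek_faithful : jShriek.Faithful
  jIns_full : jIns.Full
  jIns_faithful : jIns.Faithful
  /-- `Im i_* = Ker j^*` -/
  essImage_iIns_eq_ker_jStar : ∀ b : ℬ, iIns.essImage b ↔ IsZero (jStar.obj b)

/-- A pair of full subcategories (given as sets of objects, closed under
isomorphisms) `(T, F)` of an abelian category is a torsion pair if all
morphisms from `T` to `F` vanish and every object fits in a short exact
sequence with first term in `T` and third term in `F`. -/
structure IsTorsionPair {𝒜 : Type u₁} [Category.{v₁} 𝒜] [Abelian 𝒜]
    (T F : Set 𝒜) : Prop where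
  mem_T_of_iso : ∀ {X Y : 𝒜}, (X ≅ Y) → X ∈ T → Y ∈ T
  mem_F_of_iso : ∀ {X Y : 𝒜}, (X ≅ Y) → X ∈ F → Y ∈ F
  hom_eq_zero : ∀ {X Y : 𝒜}, X ∈ T → Y ∈ F → ∀ f : X ⟶ Y, f = 0
  exists_ses : ∀ M : 𝒜, ∃ (X Y : 𝒜) (f : X ⟶ M) (g : M ⟶ Y) (w : f ≫ g = 0),
    X ∈ T ∧ Y ∈ F ∧ (ShortComplex.mk f g w).ShortExact

/-- Given a recollement `(𝒜, ℬ, 𝒞)` and torsion pairs `(T', F')` in `𝒜` and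
`(T'', F'')` in `𝒞`, set `T = {B | i^*(B) ∈ T' ∧ j^*(B) ∈ T''}` and
`F = {B | i^!(B) ∈ F' ∧ j^*(B) ∈ F''}`. Then `Hom_ℬ(X, Y) = 0` for all
`X ∈ T` and `Y ∈ F`. -/
theorem stmt12 (𝒜 : Type u₁) (ℬ : Type u₂) (𝒞 : Type u₃)
    [Category.{v₁} 𝒜] [Category.{v₂} ℬ] [Category.{v₃} 𝒞]
    [Abelian 𝒜] [Abelian ℬ] [Abelian 𝒞] (R : Recollement 𝒜 ℬ 𝒞)
    (T' F' : Set 𝒜) (T'' F'' : Set 𝒞)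
    (h' : IsTorsionPair T' F') (h'' : IsTorsionPair T'' F'') :
    ∀ X ∈ {B : ℬ | R.iStar.obj B ∈ T' ∧ R.jStar.obj B ∈ T''},
      ∀ Y ∈ {B : ℬ | R.iShriek.obj B ∈ F' ∧ R.jStar.obj B ∈ F''},
        ∀ f : X ⟶ Y, f = 0 := by
  intro X hX Y hY f
  haveI : R.iIns.Additive := R.iIns_additive
  haveI : R.jIns.Additive := R.jIns_additive
  haveI : R.jStar.Additive := R.jStar_additive
  haveI : R.iIns.Full := R.iIns_full
  haveI : R.iIns.Faithful := R.iIns_faithful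
  haveI : R.jIns.Full := R.jIns_full
  haveI : R.jIns.Faithful := R.jIns_faithful
  haveI := R.adj₄.rightAdjoint_preservesLimits
  haveI := R.adj₃.rightAdjoint_preservesLimits
  haveI := R.adj₂.rightAdjoint_preservesLimits
  -- j^* f = 0
  have hjf : R.jStar.map f = 0 := h''.hom_eq_zero hX.2 hY.2 _
  -- f composed with unit of adj₄ at Y vanishes
  set η := R.adj₄.unit with hη
  have hfη : f ≫ η.app Y = 0 := by
    have := η.naturality f
    simp only [Functor.id_map, Functor.comp_map] at this
    rw [this, hjf]
    simp
  set K := kernel (η.app Y) with hK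
  set k : K ⟶ Y := kernel.ι (η.app Y) with hk
  set g : X ⟶ K := kernel.lift (η.app Y) f hfη with hg
  have hfg : f = g ≫ k := by simp [hg, hk]
  -- j^*(η.app Y) is a split mono
  have hsplit : R.jStar.map (η.app Y) ≫ R.adj₄.counit.app (R.jStar.obj Y) = 𝟙 _ :=
    R.adj₄.left_triangle_components Y
  haveI : Mono (R.jStar.map (η.app Y)) :=
    ⟨fun a b hab => by
      have := congrArg (· ≫ R.adj₄.counit.app (R.jStar.obj Y)) hab
      simpa [Category.assoc, hsplit] using this⟩
  -- j^* K is zero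
  have hkzero : R.jStar.map k = 0 := by
    have : R.jStar.map k ≫ R.jStar.map (η.app Y) = 0 := by
      rw [← R.jStar.map_comp, kernel.condition]; simp
    exact (cancel_mono (R.jStar.map (η.app Y))).1 (by simpa using this)
  haveI : Mono (R.jStar.map k) := R.jStar.map_mono k
  have hKzero : IsZero (R.jStar.obj K) := IsZero.of_mono_eq_zero _ hkzero
  -- K lies in the essential image of i_*
  obtain ⟨A, ⟨e⟩⟩ := (R.essImage_iIns_eq_ker_jStar K).2 hKzero
  -- transpose g to a map i^* X ⟶ A
  set g' : X ⟶ R.iIns.obj A := g ≫ e.inv with hg'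
  set g'' : R.iStar.obj X ⟶ A := (R.adj₁.homEquiv X A).symm g' with hg''
  -- build a mono A ⟶ i^! Y
  set m : A ⟶ R.iShriek.obj Y :=
    R.adj₂.unit.app A ≫ R.iShriek.map e.hom ≫ R.iShriek.map k with hm
  haveI : IsIso (R.adj₂.unit.app A) := by infer_instance
  haveI : Mono (R.iShriek.map k) := R.iShriek.map_mono k
  haveI : Mono m := by
    rw [hm]
    exact mono_comp _ _
  have hgm : g'' ≫ m = 0 := h'.hom_eq_zero hX.1 hY.1 _
  have hg''0 : g'' = 0 := by
    rw [← cancel_mono m, hgm, zero_comp]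
  have hg'0 : g' = 0 := by
    have := congrArg (R.adj₁.homEquiv X A) hg''0
    rw [Equiv.apply_symm_apply] at this
    rw [this, Adjunction.homEquiv_apply, Functor.map_zero, comp_zero]
  have hg0 : g = 0 := by
    have : g' ≫ e.hom = g := by simp [hg']
    rw [← this, hg'0, zero_comp]
  rw [hfg, hg0, zero_comp]
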